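/- Let v: R → M be an m-valuation on a semiring R with support 𝔮 = v⁻¹(0). Define U⁰(v) as the set (R \ 𝔮) ⊔ M with multiplication: x·y = xy (in R) if x, y, xy ∈ R \ 𝔮; x·y = 0 if x, y ∈ R \ 𝔮 and xy ∈ 𝔮; x·y = v(x)·y (in M) if x ∈ R \ 𝔮, y ∈ M; x·y computed in M if x, y ∈ M. Then U⁰(v) is a supertropical monoid with e = 1_M, and the map φ⁰_v: R → U⁰(v), sending a ∈ R \ 𝔮 to a and a ∈ 𝔮 to 0_M, is a surjective m-supervaluation covering v that dominates every other m-supervaluation covering v. -/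

import Mathlib

universe u v w

class STM (U : Type u) extends CommMonoid U, Zero U where
  zero_mul' : ∀ x : U, 0 * x = 0
  e : U
  e_idem : e * e = e
  ghost_zero : ∀ x : U, e * x = 0 → x = 0
  le : U → U → Prop
  le_refl : ∀ x : U, le x x
  le_trans : ∀ x y z : U, le x y → le y z → le x z
  le_total : ∀ x y : U, le x y ∨ le y x
  le_antisymm : ∀ x y : U, e * x = x → e * y = y → le x y → le y x → x = y
  le_e : ∀ x y : U, le x y ↔ le (e * x) (e * y)
  mul_le_mul : ∀ x y z : U, le x y → le (x * z) (y * z)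
  zero_le : ∀ x : U, le 0 x

namespace STM

variable {U : Type u} [STM U]

/-- `x` is a ghost element, i.e. `x ∈ eU`. -/
def Ghost (x : U) : Prop := e * x = x

/-- strict inequality for the ordering of the ghost ideal -/
def slt (x y : U) : Prop := le x y ∧ ¬ le y x

open scoped Classical in
/-- the forced addition on a supertropical monoid -/
noncomputable def add (x y : U) : U :=
  if slt (e * x) (e * y) then y
  else if slt (e * y) (e * x) then x
  else e * x

/-- the supertropical monoid `U` "is" a (supertropical) semiring: the forced
addition is associative and distributive. -/
def IsSemiring (U : Type u) [STM U] : Prop :=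
  (∀ x y z : U, add (add x y) z = add x (add y z)) ∧
  (∀ x y z : U, add x y * z = add (x * z) (y * z))

end STM

open STM

/-- A transmission between supertropical monoids. -/
structure IsTransmission {U : Type u} {V : Type v} [STM U] [STM V] (α : U → V) : Prop where
  map_zero : α 0 = 0
  map_one : α 1 = 1
  map_mul : ∀ x y : U, α (x * y) = α x * α y
  map_e : α (STM.e : U) = (STM.e : V)
  mono : ∀ x y : U, Ghost x → Ghost y → STM.le x y → STM.le (α x) (α y)


/-- A bipotent semiring: a totally ordered commutative monoid with absorbing smallest
element `0`; addition is given by the maximum. -/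
class Bipotent (M : Type v) extends CommMonoid M, Zero M, LinearOrder M where
  zero_mul' : ∀ x : M, 0 * x = 0
  zero_le' : ∀ x : M, 0 ≤ x
  mul_le_mul' : ∀ x y z : M, x ≤ y → x * z ≤ y * z

/-- An m-valuation on a semiring `R` with values in a bipotent semiring `M`. -/
def IsMVal {R : Type u} [CommSemiring R] {M : Type v} [Bipotent M] (v : R → M) : Prop :=
  v 0 = 0 ∧ v 1 = 1 ∧ (∀ a b : R, v (a * b) = v a * v b) ∧
  (∀ a b : R, v (a + b) ≤ max (v a) (v b))

/-- An m-supervaluation with values in a supertropical monoid. -/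
def IsMSuperval {R : Type u} [CommSemiring R] {V : Type v} [STM V] (ψ : R → V) : Prop :=
  ψ 0 = 0 ∧ ψ 1 = 1 ∧ (∀ a b : R, ψ (a * b) = ψ a * ψ b) ∧
  (∀ a b : R, STM.le (STM.e * ψ (a + b)) (STM.e * ψ a) ∨
    STM.le (STM.e * ψ (a + b)) (STM.e * ψ b))

/-- `ψ` covers the m-valuation `v` (the ghost map of `ψ` agrees with `v` up to the
canonical identification of the ghost ideal with `M`). -/
def CoversOrd {R : Type u} [CommSemiring R] {M : Type v} [Bipotent M] {V : Type w} [STM V]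
    (v : R → M) (ψ : R → V) : Prop :=
  ∀ a b : R, STM.le (STM.e * ψ a) (STM.e * ψ b) ↔ v a ≤ v b

/-- `φ` dominates `ψ`. -/
def Dominates {R : Type u} [CommSemiring R] {U : Type v} {V : Type w} [STM U] [STM V]
    (φ : R → U) (ψ : R → V) : Prop :=
  (∀ a b : R, φ a = φ b → ψ a = ψ b) ∧
  (∀ a b : R, STM.le (STM.e * φ a) (STM.e * φ b) → STM.le (STM.e * ψ a) (STM.e * ψ b)) ∧
  (∀ a : R, Ghost (φ a) → Ghost (ψ a))

/-- Specification of the supertropical monoid `U⁰(v)` and of the m-supervaluation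
`φ⁰_v : R → U⁰(v)`:  `U⁰(v) = (R ∖ 𝔮) ⊔ M` with the multiplication described in the
statement, `φ⁰_v` sends `a ∉ 𝔮` to itself and `a ∈ 𝔮` to `0`; it is a surjective
m-supervaluation covering `v` which dominates every m-supervaluation covering `v`. -/
def U0Spec {R M : Type u} [CommSemiring R] [Bipotent M] (v : R → M)
    {U : Type u} [STM U] (ι : M → U) (φ : R → U) : Prop :=
  -- `ι` identifies `M` with the ghost ideal of `U`
  Function.Injective ι ∧
  (∀ m m' : M, ι (m * m') = ι m * ι m') ∧
  ι 0 = 0 ∧ ι 1 = (STM.e : U) ∧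
  (∀ m m' : M, STM.le (ι m) (ι m') ↔ m ≤ m') ∧
  (∀ x : U, Ghost x ↔ ∃ m : M, ι m = x) ∧
  -- the underlying set of `U` is the disjoint union of `R ∖ 𝔮` and `M`
  (∀ x : U, (∃ m : M, ι m = x) ∨ ∃ a : R, v a ≠ 0 ∧ φ a = x) ∧
  (∀ a : R, v a = 0 → φ a = 0) ∧
  (∀ a : R, v a ≠ 0 → ¬ Ghost (φ a)) ∧
  (∀ a b : R, v a ≠ 0 → v b ≠ 0 → (φ a = φ b ↔ a = b)) ∧
  -- multiplication in `U⁰(v)` as described in the statement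
  (∀ a b : R, φ a * φ b = φ (a * b)) ∧
  (∀ a b : R, v (a * b) = 0 → φ a * φ b = 0) ∧
  (∀ (a : R) (m : M), φ a * ι m = ι (v a * m)) ∧
  -- `φ` covers `v`
  (∀ a : R, STM.e * φ a = ι (v a)) ∧
  -- `φ` is a (surjective) m-supervaluation
  IsMSuperval φ ∧
  -- `φ` dominates every m-supervaluation covering `v`
  (∀ (V : Type u) [STM V] (ψ : R → V), IsMSuperval ψ → CoversOrd v ψ → Dominates φ ψ)

section U0Construction

variable {R M : Type u} [CommSemiring R] [Bipotent M]

lemma Bip.mul_zero (x : M) : x * 0 = 0 := by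
  rw [mul_comm]; exact Bipotent.zero_mul' x

variable (v : R → M)

/-- The carrier of `U⁰(v)`. -/
abbrev U0 := {a : R // v a ≠ 0} ⊕ M

variable {v}

namespace U0

def mul : U0 v → U0 v → U0 v
  | .inl a, .inl b => if h : v (a.1 * b.1) = 0 then .inr 0 else .inl ⟨a.1 * b.1, h⟩
  | .inl a, .inr m => .inr (v a.1 * m)
  | .inr m, .inl a => .inr (v a.1 * m)
  | .inr m, .inr m' => .inr (m * m')

def one (hv : IsMVal v) : U0 v :=
  if h : (1 : M) = 0 then .inr 1 else .inl ⟨1, by rw [hv.2.1]; exact h⟩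

def proj : U0 v → M
  | .inl a => v a.1
  | .inr m => m

lemma elim_one_zero (hv : IsMVal v) (h1 : (1 : M) = 0) (a : {a : R // v a ≠ 0}) :
    False :=
  a.2 (by rw [← mul_one a.1, hv.2.2.1 a.1 1, hv.2.1, h1, Bip.mul_zero])

lemma mul_comm' : ∀ x y : U0 v, mul x y = mul y x
  | .inl a, .inl b => by simp only [mul]; rw [mul_comm a.1 b.1]
  | .inl a, .inr m => rfl
  | .inr m, .inl a => rfl
  | .inr m, .inr m' => by simp only [mul]; rw [mul_comm]

lemma mul_assoc' (hv : IsMVal v) : ∀ x y z : U0 v, mul (mul x y) z = mul x (mul y z) := by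
  obtain ⟨hv0, hv1, hvm, hva⟩ := hv
  rintro (a | m) (b | n) (c | p) <;> simp only [mul]
  · -- inl inl inl
    by_cases hab : v (a.1 * b.1) = 0
    · rw [dif_pos hab]
      by_cases hbc : v (b.1 * c.1) = 0
      · rw [dif_pos hbc]; simp only [mul, Bip.mul_zero]
      · rw [dif_neg hbc]; simp only [mul]
        rw [dif_pos (by rw [hvm, hvm, ← mul_assoc, ← hvm, hab, Bipotent.zero_mul'])]
        simp only [Bip.mul_zero]
    · rw [dif_neg hab]; simp only [mul]
      by_cases hbc : v (b.1 * c.1) = 0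
      · rw [dif_pos hbc]; simp only [mul]
        rw [dif_pos (by rw [mul_assoc, hvm, hbc, Bip.mul_zero]), Bip.mul_zero]
      · rw [dif_neg hbc]; simp only [mul]
        by_cases habc : v (a.1 * b.1 * c.1) = 0
        · rw [dif_pos habc, dif_pos (by rw [← mul_assoc]; exact habc)]
        · rw [dif_neg habc, dif_neg (by rw [← mul_assoc]; exact habc)]
          simp only [mul_assoc]
  · -- inl inl inr
    by_cases hab : v (a.1 * b.1) = 0
    · rw [dif_pos hab]; simp only [mul]
      rw [← mul_assoc, ← hvm, hab, Bipotent.zero_mul']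
    · rw [dif_neg hab]; simp only [mul]
      rw [hvm, mul_assoc]
  · -- inl inr inl
    rw [← mul_assoc, ← mul_assoc, mul_comm (v c.1) (v a.1)]
  · -- inl inr inr
    rw [mul_assoc]
  · -- inr inl inl
    by_cases hab : v (b.1 * c.1) = 0
    · rw [dif_pos hab]; simp only [mul]
      rw [← mul_assoc, mul_comm (v c.1) (v b.1), ← hvm, hab, Bipotent.zero_mul',
        Bip.mul_zero]
    · rw [dif_neg hab]; simp only [mul]
      rw [hvm, ← mul_assoc, mul_comm (v c.1) (v b.1)]
  · -- inr inl inr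
    rw [mul_comm (v b.1) m, mul_assoc]
  · -- inr inr inl
    rw [← mul_assoc, ← mul_assoc, mul_comm (v c.1) m]
  · -- inr inr inr
    rw [mul_assoc]

lemma one_mul' (hv : IsMVal v) : ∀ x : U0 v, mul (one hv) x = x := by
  rintro (a | m) <;> unfold one
  · rcases em ((1 : M) = 0) with h1 | h1
    · exact absurd h1 fun h1 => elim_one_zero hv h1 a
    · rw [dif_neg h1]; simp only [mul]
      rw [dif_neg (by rw [one_mul]; exact a.2)]
      congr 1
      exact Subtype.ext (one_mul a.1)
  · rcases em ((1 : M) = 0) with h1 | h1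
    · rw [dif_pos h1]; simp only [mul, one_mul]
    · rw [dif_neg h1]; simp only [mul]
      rw [hv.2.1, one_mul]

lemma proj_mul (hv : IsMVal v) : ∀ x y : U0 v, proj (mul x y) = proj x * proj y := by
  obtain ⟨hv0, hv1, hvm, hva⟩ := hv
  rintro (a | m) (b | n) <;> simp only [mul, proj]
  · by_cases hab : v (a.1 * b.1) = 0
    · rw [dif_pos hab]; simp only [proj]; rw [← hvm, hab]
    · rw [dif_neg hab]; simp only [proj]; rw [hvm]
  · rw [mul_comm]

lemma zero_mul'' : ∀ x : U0 v, mul (.inr 0) x = .inr 0 := by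
  rintro (a | m) <;> simp only [mul]
  · rw [Bip.mul_zero]
  · rw [Bipotent.zero_mul']

lemma e_idem' : mul (Sum.inr 1 : U0 v) (.inr 1) = .inr 1 := by
  simp only [mul]; rw [one_mul]

lemma ghost_zero'' : ∀ x : U0 v, mul (.inr 1) x = .inr 0 → x = .inr 0 := by
  rintro (a | m) h <;> simp only [mul] at h
  · exact absurd (by rwa [mul_one, Sum.inr.injEq] at h) a.2
  · rwa [one_mul] at h

lemma proj_e_mul : ∀ x : U0 v, proj (mul (.inr 1) x) = proj x := by
  rintro (a | m) <;> simp only [mul, proj]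
  · rw [mul_one]
  · rw [one_mul]

lemma antisymm' : ∀ x y : U0 v, mul (.inr 1) x = x → mul (.inr 1) y = y →
    proj x ≤ proj y → proj y ≤ proj x → x = y := by
  rintro (a | m) (b | n) hx hy h1 h2 <;> simp only [mul] at hx hy
  · exact absurd hx (by simp)
  · exact absurd hx (by simp)
  · exact absurd hy (by simp)
  · rw [Sum.inr.injEq]
    exact le_antisymm h1 h2

/-- The supertropical monoid structure on `U⁰(v)`. -/
def stm (hv : IsMVal v) : STM (U0 v) where
  mul := mul
  mul_assoc := mul_assoc' hv
  one := one hv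
  one_mul := one_mul' hv
  mul_one x := (mul_comm' x (one hv)).trans (one_mul' hv x)
  mul_comm := mul_comm'
  zero := .inr 0
  zero_mul' := zero_mul''
  e := .inr 1
  e_idem := e_idem'
  ghost_zero := ghost_zero''
  le x y := proj x ≤ proj y
  le_refl x := le_refl _
  le_trans x y z := le_trans
  le_total x y := le_total _ _
  le_antisymm := antisymm'
  le_e x y := by
    show proj x ≤ proj y ↔ proj (mul (.inr 1) x) ≤ proj (mul (.inr 1) y)
    rw [show proj (mul (.inr 1) x) = proj x from proj_e_mul x,
    show proj (mul (.inr 1) y) = proj y from proj_e_mul y]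
  mul_le_mul x y z h := by
    show proj (mul x z) ≤ proj (mul y z)
    rw [proj_mul hv, proj_mul hv]
    exact Bipotent.mul_le_mul' _ _ _ h
  zero_le x := Bipotent.zero_le' _

end U0

section STMFacts

variable {V : Type w} [STM V]

lemma stm_mul_zero (x : V) : x * 0 = 0 := by
  rw [mul_comm]; exact STM.zero_mul' x

lemma ghost_e_mul (x : V) : Ghost ((STM.e : V) * x) := by
  show STM.e * (STM.e * x) = STM.e * x
  rw [← mul_assoc, STM.e_idem]

lemma ghost_zero' : Ghost (0 : V) := stm_mul_zero _

end STMFacts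

end U0Construction

/-- Existence of the initial m-supervaluation `φ⁰_v : R → U⁰(v)` covering `v`. -/
theorem initial_m_supervaluation_exists {R M : Type u} [CommSemiring R] [Bipotent M]
    (v : R → M) (hv : IsMVal v) (hsurj : Function.Surjective v) :
    ∃ (U : Type u) (sU : STM U) (ι : M → U) (φ : R → U),
      @U0Spec R M _ _ v U sU ι φ := by
  classical
  letI S : STM (U0 v) := U0.stm hv
  set φ : R → U0 v := fun a => if h : v a = 0 then Sum.inr 0 else Sum.inl ⟨a, h⟩ with hφ
  obtain ⟨hv0, hv1, hvm, hva⟩ := id hv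
  have hφdef : ∀ a, φ a = if h : v a = 0 then Sum.inr 0 else Sum.inl ⟨a, h⟩ :=
    fun a => rfl
  have hmul : ∀ x y : U0 v, x * y = U0.mul x y := fun _ _ => rfl
  have he : (STM.e : U0 v) = Sum.inr 1 := rfl
  have hz : (0 : U0 v) = Sum.inr 0 := rfl
  have hle : ∀ x y : U0 v, STM.le x y ↔ U0.proj x ≤ U0.proj y := fun _ _ => Iff.rfl
  have ephi : ∀ a : R, (STM.e : U0 v) * φ a = Sum.inr (v a) := by
    intro a
    rw [hmul, he, hφdef]
    by_cases h : v a = 0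
    · rw [dif_pos h, h]
      simp only [U0.mul]
      rw [one_mul]
    · rw [dif_neg h]
      simp only [U0.mul]
      rw [mul_one]
  have phimul : ∀ a b : R, φ a * φ b = φ (a * b) := by
    intro a b
    rw [hmul, hφdef, hφdef, hφdef]
    by_cases ha : v a = 0
    · have hab : v (a * b) = 0 := by rw [hvm, ha, Bipotent.zero_mul']
      rw [dif_pos ha, dif_pos hab]
      by_cases hb : v b = 0
      · rw [dif_pos hb]
        simp only [U0.mul]
        rw [Bipotent.zero_mul']
      · rw [dif_neg hb]
        simp only [U0.mul]
        rw [Bip.mul_zero]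
    · rw [dif_neg ha]
      by_cases hb : v b = 0
      · have hab : v (a * b) = 0 := by rw [hvm, hb, Bip.mul_zero]
        rw [dif_pos hb, dif_pos hab]
        simp only [U0.mul]
        rw [Bip.mul_zero]
      · rw [dif_neg hb]
        simp only [U0.mul]
  have ghost_iff : ∀ x : U0 v, Ghost x ↔ ∃ m : M, Sum.inr m = x := by
    intro x
    constructor
    · intro h
      rcases x with a | m
      · exfalso
        have h' : U0.mul (.inr 1) (.inl a) = .inl a := h
        simp only [U0.mul] at h'
        exact absurd h' (by simp)
      · exact ⟨m, rfl⟩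
    · rintro ⟨m, rfl⟩
      show U0.mul (.inr 1) (.inr m) = .inr m
      simp only [U0.mul]
      rw [one_mul]
  have notghost : ∀ a : R, v a ≠ 0 → ¬ Ghost (φ a) := by
    intro a ha hg
    rw [ghost_iff] at hg
    obtain ⟨m, hm⟩ := hg
    rw [hφdef, dif_neg ha] at hm
    exact absurd hm (by simp)
  have psizero : ∀ (V : Type u) [STM V] (ψ : R → V), IsMSuperval ψ → CoversOrd v ψ →
      ∀ a : R, v a = 0 → ψ a = 0 := by
    intro V _ ψ hψ hc a ha
    have h1 : STM.le (STM.e * ψ a) (STM.e * ψ 0) := (hc a 0).2 (by rw [ha, hv0])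
    rw [hψ.1, stm_mul_zero] at h1
    have h3 := STM.zero_le (STM.e * ψ a)
    have h4 := STM.le_antisymm _ _ (ghost_e_mul (ψ a)) (ghost_zero') h1 h3
    exact STM.ghost_zero _ h4
  refine ⟨U0 v, S, Sum.inr, φ, Sum.inr_injective, fun m m' => rfl, rfl, rfl,
    fun m m' => Iff.rfl, ghost_iff, ?_, ?_, notghost, ?_, phimul, ?_, ?_, ephi, ?_, ?_⟩
  · -- disjoint union
    rintro (a | m)
    · exact Or.inr ⟨a.1, a.2, by rw [hφdef, dif_neg a.2]⟩
    · exact Or.inl ⟨m, rfl⟩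
  · -- v a = 0 → φ a = 0
    intro a ha
    rw [hφdef, dif_pos ha, hz]
  · -- injectivity on R ∖ 𝔮
    intro a b ha hb
    rw [hφdef, hφdef, dif_neg ha, dif_neg hb]
    constructor
    · intro h
      exact congrArg Subtype.val (Sum.inl.inj h)
    · intro h
      subst h
      rfl
  · -- zero products
    intro a b hab
    rw [phimul, hφdef, dif_pos hab, hz]
  · -- φ a * ι m
    intro a m
    rw [hmul, hφdef]
    by_cases ha : v a = 0
    · rw [dif_pos ha, ha]
      simp only [U0.mul]
    · rw [dif_neg ha]
      simp only [U0.mul]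
  · -- IsMSuperval φ
    refine ⟨by rw [hφdef, dif_pos hv0, hz], ?_, fun a b => (phimul a b).symm, ?_⟩
    · -- φ 1 = 1
      have hone : (1 : U0 v) = U0.one hv := rfl
      by_cases h1 : (1 : M) = 0
      · rw [hφdef, dif_pos (by rw [hv1]; exact h1), hone, U0.one, dif_pos h1, h1]
      · rw [hφdef, dif_neg (by rw [hv1]; exact h1), hone, U0.one, dif_neg h1]
    · intro a b
      rw [ephi, ephi, ephi]
      have h := hva a b
      rcases le_max_iff.1 h with h' | h'
      · exact Or.inl h'
      · exact Or.inr h'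
  · -- domination
    intro V _ ψ hψ hc
    refine ⟨?_, ?_, ?_⟩
    · intro a b hab
      by_cases ha : v a = 0 <;> by_cases hb : v b = 0
      · rw [psizero V ψ hψ hc a ha, psizero V ψ hψ hc b hb]
      · exfalso
        rw [hφdef, hφdef, dif_pos ha, dif_neg hb] at hab
        exact absurd hab (by simp)
      · exfalso
        rw [hφdef, hφdef, dif_neg ha, dif_pos hb] at hab
        exact absurd hab (by simp)
      · rw [hφdef, hφdef, dif_neg ha, dif_neg hb] at hab
        rw [show a = b from congrArg Subtype.val (Sum.inl.inj hab)]
    · intro a b h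
      rw [ephi, ephi] at h
      exact (hc a b).2 h
    · intro a hg
      by_cases ha : v a = 0
      · rw [psizero V ψ hψ hc a ha]
        exact ghost_zero'
      · exact absurd hg (notghost a ha)
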